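/- The KL-regularized control cost of the optimal Decision Flow chain equals the KL divergence between target and prior terminal marginals: C(p^*, π^*) = Σ_{s_T} π_T^{target}(s_T) log(π_T^{target}(s_T)/π_T^{prior}(s_T)), where π_T^{target}(σ) = exp(-E(σ))/Z and C is defined as in the Decision Flow MDP. -/

import Mathlib

/-- Marginals of a Markov chain with kernels `q`, started at state `s0` at time `τ`. -/
noncomputable def marg {S : Type*} [Fintype S] [DecidableEq S]
    (q : ℕ → S → S → ℝ) (τ : ℕ) (s0 : S) : ℕ → S → ℝ
  | 0, s => if s = s0 then 1 else 0
  | k + 1, s' => ∑ s, marg q τ s0 k s * q (τ + k) s s'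

lemma marg_zero' {S : Type*} [Fintype S] [DecidableEq S]
    (q : ℕ → S → S → ℝ) (s0 : S) (s : S) :
    marg q 0 s0 0 s = if s = s0 then 1 else 0 := rfl

lemma marg_succ' {S : Type*} [Fintype S] [DecidableEq S]
    (q : ℕ → S → S → ℝ) (s0 : S) (k : ℕ) (s' : S) :
    marg q 0 s0 (k + 1) s' = ∑ s, marg q 0 s0 k s * q k s s' := by
  simp [marg]

/-- The backward "value" function of the Decision Flow. -/
noncomputable def phiAux {S : Type*} [Fintype S] [DecidableEq S]
    (T : ℕ) (p : ℕ → S → S → ℝ) (s0 : S) (G : ℕ → S → S → ℝ) (E : S → ℝ)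
    (t : ℕ) (s : S) : ℝ :=
  ∑ sT, Real.exp (-E sT) * G t s sT / marg p 0 s0 T sT

/-- the KL-regularized control cost of the optimal Decision Flow chain
`C(p*, π*) = ∑_t ∑_{s,s'} π*_t(s) p*_t(s'|s) log(p*_t(s'|s)/p_t^prior(s'|s))` equals the
KL divergence between the target terminal marginal `π_T^target = exp(-E)/Z` and the
prior terminal marginal. -/
theorem decision_flow_cost_eq_terminal_kl
    {S : Type*} [Fintype S] [DecidableEq S] (T : ℕ) (p : ℕ → S → S → ℝ) (s0 : S)
    (hp : ∀ t, t < T → ∀ s : S, (∀ s', 0 ≤ p t s s') ∧ ∑ s', p t s s' = 1)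
    (G : ℕ → S → S → ℝ)
    (hGT : ∀ s s' : S, G T s s' = if s = s' then 1 else 0)
    (hGrec : ∀ t, t < T → ∀ s sT : S, G t s sT = ∑ s', p t s s' * G (t + 1) s' sT)
    (E : S → ℝ)
    (hpos : ∀ σ : S, 0 < Real.exp (-E σ) → 0 < marg p 0 s0 T σ)
    (pstar : ℕ → S → S → ℝ)
    (hpstar : ∀ t s s', pstar t s s' =
      p t s s' * (∑ sT, Real.exp (-E sT) * G (t + 1) s' sT / marg p 0 s0 T sT) /
        ∑ s'', p t s s'' * (∑ sT, Real.exp (-E sT) * G (t + 1) s'' sT / marg p 0 s0 T sT)) :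
    ∑ t ∈ Finset.range T, ∑ s, ∑ s',
        marg pstar 0 s0 t s *
          (pstar t s s' * Real.log (pstar t s s' / p t s s')) =
      ∑ sT, (Real.exp (-E sT) / ∑ σ, Real.exp (-E σ)) *
        Real.log ((Real.exp (-E sT) / ∑ σ, Real.exp (-E σ)) / marg p 0 s0 T sT) := by
  classical
  set φ := phiAux T p s0 G E with hφdef
  have hm : ∀ sT, 0 < marg p 0 s0 T sT := fun sT => hpos sT (Real.exp_pos _)
  -- G is a (sub)probability kernel to time T
  have hG : ∀ n t, t + n = T → ∀ s : S,
      (∀ sT, 0 ≤ G t s sT) ∧ ∑ sT, G t s sT = 1 := by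
    intro n
    induction n with
    | zero =>
      intro t ht s
      have htT : t = T := by omega
      subst htT
      constructor
      · intro sT; rw [hGT]; split <;> norm_num
      · simp [hGT]
    | succ n ih =>
      intro t ht s
      have htT : t < T := by omega
      have h1 : t + 1 + n = T := by omega
      constructor
      · intro sT
        rw [hGrec t htT]
        exact Finset.sum_nonneg fun s' _ =>
          mul_nonneg ((hp t htT s).1 s') ((ih (t + 1) h1 s').1 sT)
      · have h2 : ∑ sT, G t s sT = ∑ sT, ∑ s', p t s s' * G (t + 1) s' sT :=
          Finset.sum_congr rfl fun sT _ => hGrec t htT s sT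
        rw [h2, Finset.sum_comm]
        have h3 : ∀ s' : S, ∑ sT, p t s s' * G (t + 1) s' sT = p t s s' := by
          intro s'
          rw [← Finset.mul_sum, (ih (t + 1) h1 s').2, mul_one]
        rw [Finset.sum_congr rfl fun s' _ => h3 s']
        exact (hp t htT s).2
  -- positivity of φ
  have hφpos : ∀ t, t ≤ T → ∀ s : S, 0 < φ t s := by
    intro t ht s
    obtain ⟨hGnn, hGsum⟩ := hG (T - t) t (by omega) s
    have hex : ∃ sT : S, 0 < G t s sT := by
      by_contra h
      push_neg at h
      have : ∑ sT, G t s sT ≤ 0 := Finset.sum_nonpos fun sT _ => h sT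
      linarith
    obtain ⟨sT0, hsT0⟩ := hex
    rw [hφdef]
    refine Finset.sum_pos' (fun sT _ => ?_) ⟨sT0, Finset.mem_univ _, ?_⟩
    · exact div_nonneg (mul_nonneg (Real.exp_pos _).le (hGnn sT)) (hm sT).le
    · exact div_pos (mul_pos (Real.exp_pos _) hsT0) (hm sT0)
  -- row-sum identity: ∑ s' p φ(t+1) = φ t
  have hrow : ∀ t, t < T → ∀ s : S, ∑ s', p t s s' * φ (t + 1) s' = φ t s := by
    intro t ht s
    rw [hφdef]
    show ∑ s', p t s s' * ∑ sT, Real.exp (-E sT) * G (t + 1) s' sT / marg p 0 s0 T sT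
        = ∑ sT, Real.exp (-E sT) * G t s sT / marg p 0 s0 T sT
    have h1 : ∀ s' : S,
        p t s s' * ∑ sT, Real.exp (-E sT) * G (t + 1) s' sT / marg p 0 s0 T sT
        = ∑ sT, Real.exp (-E sT) * (p t s s' * G (t + 1) s' sT) / marg p 0 s0 T sT := by
      intro s'
      rw [Finset.mul_sum]
      exact Finset.sum_congr rfl fun sT _ => by ring
    rw [Finset.sum_congr rfl fun s' _ => h1 s', Finset.sum_comm]
    refine Finset.sum_congr rfl fun sT _ => ?_
    rw [← Finset.sum_div, ← Finset.mul_sum, ← hGrec t ht s sT]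
  -- optimal kernel in terms of φ
  have hpstar' : ∀ t, t < T → ∀ s s' : S,
      pstar t s s' = p t s s' * φ (t + 1) s' / φ t s := by
    intro t ht s s'
    rw [hpstar t s s', ← hrow t ht s]
    rfl
  -- pstar rows sum to 1
  have hrowsum : ∀ t, t < T → ∀ s : S, ∑ s', pstar t s s' = 1 := by
    intro t ht s
    rw [Finset.sum_congr rfl fun s' _ => hpstar' t ht s s', ← Finset.sum_div,
      hrow t ht s, div_self (hφpos t ht.le s).ne']
  -- marginals of pstar
  have hmargstar : ∀ t, t ≤ T → ∀ s : S,
      marg pstar 0 s0 t s = marg p 0 s0 t s * φ t s / φ 0 s0 := by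
    intro t
    induction t with
    | zero =>
      intro _ s
      rw [marg_zero', marg_zero']
      by_cases h : s = s0
      · rw [if_pos h, one_mul, h, div_self (hφpos 0 (Nat.zero_le _) s0).ne']
      · rw [if_neg h, zero_mul, zero_div]
    | succ t ih =>
      intro ht s'
      have htT : t < T := by omega
      rw [marg_succ', marg_succ']
      have h1 : ∀ s : S,
          marg pstar 0 s0 t s * pstar t s s'
          = marg p 0 s0 t s * p t s s' * φ (t + 1) s' / φ 0 s0 := by
        intro s
        rw [ih htT.le s, hpstar' t htT s s']
        have hφts : φ t s ≠ 0 := (hφpos t htT.le s).ne'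
        have hφ0 : φ 0 s0 ≠ 0 := (hφpos 0 (Nat.zero_le _) s0).ne'
        field_simp
      rw [Finset.sum_congr rfl fun s _ => h1 s, ← Finset.sum_div]
      congr 1
      rw [← Finset.sum_mul]
  -- G 0 s0 = terminal marginal of prior
  have hG00 : ∀ sT : S, G 0 s0 sT = marg p 0 s0 T sT := by
    intro sT
    have key : ∀ t, t ≤ T → ∑ s, marg p 0 s0 t s * G t s sT = G 0 s0 sT := by
      intro t
      induction t with
      | zero =>
        intro _
        simp [marg_zero']
      | succ t ih =>
        intro ht
        have htT : t < T := by omega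
        rw [← ih htT.le]
        have h1 : ∀ s : S, marg p 0 s0 t s * G t s sT
            = ∑ s', marg p 0 s0 t s * (p t s s' * G (t + 1) s' sT) := by
          intro s
          rw [← Finset.mul_sum, ← hGrec t htT s sT]
        rw [Finset.sum_congr rfl fun s _ => h1 s, Finset.sum_comm]
        refine Finset.sum_congr rfl fun s' _ => ?_
        rw [marg_succ', Finset.sum_mul]
        exact Finset.sum_congr rfl fun s _ => by ring
    have := key T le_rfl
    rw [← this]
    rw [Finset.sum_congr rfl fun s _ => by rw [hGT s sT]]
    simp
  -- φ 0 s0 = Z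
  have hZ : φ 0 s0 = ∑ σ, Real.exp (-E σ) := by
    rw [hφdef]
    show ∑ sT, Real.exp (-E sT) * G 0 s0 sT / marg p 0 s0 T sT = _
    refine Finset.sum_congr rfl fun sT _ => ?_
    rw [hG00 sT, mul_div_assoc, div_self (hm sT).ne', mul_one]
  have hne : Nonempty S := ⟨s0⟩
  have hZpos : 0 < ∑ σ, Real.exp (-E σ) :=
    Finset.sum_pos (fun σ _ => Real.exp_pos _) Finset.univ_nonempty
  -- φ at time T
  have hφT : ∀ sT : S, φ T sT = Real.exp (-E sT) / marg p 0 s0 T sT := by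
    intro sT
    rw [hφdef]
    show ∑ s, Real.exp (-E s) * G T sT s / marg p 0 s0 T s = _
    rw [Finset.sum_eq_single sT]
    · rw [hGT, if_pos rfl, mul_one]
    · intro s _ hs
      rw [hGT, if_neg (Ne.symm hs), mul_zero, zero_div]
    · intro h; exact absurd (Finset.mem_univ sT) h
  -- terminal marginal of pstar
  have hmargstarT : ∀ sT : S,
      marg pstar 0 s0 T sT = Real.exp (-E sT) / ∑ σ, Real.exp (-E σ) := by
    intro sT
    rw [hmargstar T le_rfl sT, hφT sT, hZ, mul_div_assoc' , mul_div_assoc]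
    rw [mul_div_assoc']
    rw [mul_comm, mul_div_assoc, div_self (hm sT).ne', mul_one]
  -- the telescoping function
  set A : ℕ → ℝ := fun t => ∑ s, marg pstar 0 s0 t s * Real.log (φ t s) with hA
  -- per-time-step identity
  have hstep : ∀ t, t < T →
      (∑ s, ∑ s', marg pstar 0 s0 t s *
        (pstar t s s' * Real.log (pstar t s s' / p t s s')))
      = A (t + 1) - A t := by
    intro t ht
    have hterm : ∀ s s' : S,
        marg pstar 0 s0 t s * (pstar t s s' * Real.log (pstar t s s' / p t s s'))
        = marg pstar 0 s0 t s * pstar t s s' * Real.log (φ (t + 1) s')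
          - marg pstar 0 s0 t s * pstar t s s' * Real.log (φ t s) := by
      intro s s'
      rcases eq_or_lt_of_le ((hp t ht s).1 s') with hp0 | hp0
      · have : pstar t s s' = 0 := by
          rw [hpstar' t ht s s', ← hp0, zero_mul, zero_div]
        rw [this]; ring
      · have hψ := hφpos (t + 1) (by omega) s'
        have hφ := hφpos t ht.le s
        have hq : pstar t s s' / p t s s' = φ (t + 1) s' / φ t s := by
          rw [hpstar' t ht s s']
          field_simp
        rw [hq, Real.log_div hψ.ne' hφ.ne']
        ring
    rw [Finset.sum_congr rfl fun s _ => Finset.sum_congr rfl fun s' _ => hterm s s']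
    rw [Finset.sum_congr rfl fun s _ => Finset.sum_sub_distrib _ _]
    rw [Finset.sum_sub_distrib]
    congr 1
    · -- first part equals A (t+1)
      rw [hA, Finset.sum_comm]
      refine Finset.sum_congr rfl fun s' _ => ?_
      rw [marg_succ', Finset.sum_mul]
    · -- second part equals A t
      rw [hA]
      refine Finset.sum_congr rfl fun s _ => ?_
      rw [← Finset.sum_mul, ← Finset.mul_sum, hrowsum t ht s, mul_one]
  rw [Finset.sum_congr rfl fun t ht => hstep t (Finset.mem_range.mp ht)]
  rw [Finset.sum_range_sub A]
  have hA0 : A 0 = Real.log (∑ σ, Real.exp (-E σ)) := by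
    rw [hA]
    show (∑ s, marg pstar 0 s0 0 s * Real.log (φ 0 s)) = _
    rw [Finset.sum_eq_single s0]
    · rw [marg_zero', if_pos rfl, one_mul, hZ]
    · intro s _ hs
      rw [marg_zero', if_neg hs, zero_mul]
    · intro h; exact absurd (Finset.mem_univ s0) h
  have hAT : A T = ∑ sT, (Real.exp (-E sT) / ∑ σ, Real.exp (-E σ)) *
      Real.log (Real.exp (-E sT) / marg p 0 s0 T sT) := by
    rw [hA]
    exact Finset.sum_congr rfl fun sT _ => by rw [hmargstarT sT, hφT sT]
  rw [hA0, hAT]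
  have hlog : ∀ sT : S,
      Real.log ((Real.exp (-E sT) / ∑ σ, Real.exp (-E σ)) / marg p 0 s0 T sT)
      = Real.log (Real.exp (-E sT) / marg p 0 s0 T sT)
        - Real.log (∑ σ, Real.exp (-E σ)) := by
    intro sT
    rw [div_div, mul_comm, ← div_div, Real.log_div (div_pos (Real.exp_pos _) (hm sT)).ne'
      hZpos.ne']
  simp only [hlog]
  have hsum1 : ∑ sT, Real.exp (-E sT) / (∑ σ, Real.exp (-E σ)) = 1 := by
    rw [← Finset.sum_div, div_self hZpos.ne']
  calc (∑ sT, (Real.exp (-E sT) / ∑ σ, Real.exp (-E σ)) *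
          Real.log (Real.exp (-E sT) / marg p 0 s0 T sT))
        - Real.log (∑ σ, Real.exp (-E σ))
      = ∑ sT, ((Real.exp (-E sT) / ∑ σ, Real.exp (-E σ)) *
          Real.log (Real.exp (-E sT) / marg p 0 s0 T sT)
          - (Real.exp (-E sT) / ∑ σ, Real.exp (-E σ)) *
            Real.log (∑ σ, Real.exp (-E σ))) := by
        rw [Finset.sum_sub_distrib, ← Finset.sum_mul, hsum1, one_mul]
    _ = _ := Finset.sum_congr rfl fun sT _ => by ring
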